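/- Let S : ℝ≥0 → ℝ≥0 be non-decreasing with S(x) > 0 for x > 0, let λ > 0, and define μ = sup_{y ≥ 0} max_{γ ∈ [0,1]} γ·(1 − S(γy)/S(y)). Then for all x, y, z > 0: (S(y/(λz))·x − S(x/z)·x) / (S(y/(λz))·y) ≤ μ/λ. -/

import Mathlib

open Set

theorem per_edge_variational_bound
    (S : ℝ → ℝ)
    (hmono : MonotoneOn S (Ici 0))
    (hpos : ∀ x : ℝ, 0 < x → 0 < S x)
    (lam : ℝ) (hlam : 0 < lam)
    (μ : ℝ)
    (hμ : μ = sSup {v : ℝ | ∃ y ≥ (0:ℝ), ∃ γ ∈ Icc (0:ℝ) 1,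
        v = γ * (1 - S (γ * y) / S y)}) :
    ∀ x > (0:ℝ), ∀ y > (0:ℝ), ∀ z > (0:ℝ),
      (S (y / (lam * z)) * x - S (x / z) * x) / (S (y / (lam * z)) * y)
        ≤ μ / lam := by
  intro x hx y hy z hz
  set T : Set ℝ := {v : ℝ | ∃ y ≥ (0:ℝ), ∃ γ ∈ Icc (0:ℝ) 1,
      v = γ * (1 - S (γ * y) / S y)} with hT
  have hbdd : BddAbove T := by
    refine ⟨1, ?_⟩
    rintro v ⟨b, hb0, γ, ⟨hγ0, hγ1⟩, rfl⟩
    rcases eq_or_lt_of_le hγ0 with h | h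
    · simp [← h]
    rcases eq_or_lt_of_le hb0 with h2 | h2
    · rcases eq_or_ne (S 0) 0 with h3 | h3
      · simp [← h2, h3, hγ1]
      · simp [← h2, div_self h3, hγ1]
    · have hS1 : 0 < S b := hpos b h2
      have hS2 : 0 < S (γ * b) := hpos _ (mul_pos h h2)
      have : 0 ≤ S (γ * b) / S b := le_of_lt (div_pos hS2 hS1)
      nlinarith
  have hμ0 : 0 ≤ μ := by
    rw [hμ]
    refine le_csSup hbdd ?_
    exact ⟨0, le_refl 0, 0, ⟨le_refl 0, zero_le_one⟩, by ring⟩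
  set u := y / (lam * z) with hu
  set w := x / z with hw
  have hu0 : 0 < u := div_pos hy (mul_pos hlam hz)
  have hw0 : 0 < w := div_pos hx hz
  have hSu : 0 < S u := hpos u hu0
  have hSw : 0 < S w := hpos w hw0
  have key : (S u * x - S w * x) / (S u * y) = (w / u) * (1 - S w / S u) / lam := by
    rw [hu, hw]
    field_simp
    have h' : S (y / (lam * z)) ≠ 0 := hSu.ne'
    rw [sub_div, div_self h']
  rw [key]
  by_cases hle : w ≤ u
  · have hmem : (w / u) * (1 - S w / S u) ∈ T := by
      refine ⟨u, hu0.le, w / u, ⟨le_of_lt (div_pos hw0 hu0), (div_le_one hu0).2 hle⟩, ?_⟩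
      rw [div_mul_cancel₀ _ (ne_of_gt hu0)]
    have : (w / u) * (1 - S w / S u) ≤ μ := hμ ▸ le_csSup hbdd hmem
    gcongr
  · push_neg at hle
    have hS : S u ≤ S w := hmono (le_of_lt hu0) (le_of_lt hw0) (le_of_lt hle)
    have h1 : (1 : ℝ) ≤ S w / S u := (one_le_div hSu).2 hS
    have : (w / u) * (1 - S w / S u) ≤ 0 :=
      mul_nonpos_of_nonneg_of_nonpos (le_of_lt (div_pos hw0 hu0)) (by linarith)
    have h2 : (w / u) * (1 - S w / S u) / lam ≤ 0 :=
      div_nonpos_of_nonpos_of_nonneg this hlam.le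
    exact h2.trans (div_nonneg hμ0 hlam.le)
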